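/- Let X be a nonempty cocompact proper CAT(0) metric space and let R, ε, c > 0 be real numbers. Then there exists k = k(R, ε, c) > 0 such that for all points o, z, y, x ∈ X satisfying: (1) d(o, z) + d(z, y) = d(o, y) (i.e. z lies on a geodesic from o to y); (2) d(x, y) ≤ R and d(z, y) ≥ k; (3) z is a CAT(-1) point of radius c; every geodesic σ : [0,1] → X from o to x meets the open ball of radius ε around z: there exists s ∈ [0,1] with d(σ(s), z) < ε. -/

import Mathlib

open Metric Real

/-- A geodesic from `x` to `y`, parametrized affinely on `[0,1]`. -/
def IsGeodesic {X : Type*} [MetricSpace X] (σ : ℝ → X) (x y : X) : Prop :=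
  σ 0 = x ∧ σ 1 = y ∧
    ∀ s ∈ Set.Icc (0:ℝ) 1, ∀ t ∈ Set.Icc (0:ℝ) 1,
      dist (σ s) (σ t) = |s - t| * dist x y

/-- A geodesic space: every pair of points is joined by a geodesic. -/
def GeodesicMetricSpace (X : Type*) [MetricSpace X] : Prop :=
  ∀ x y : X, ∃ σ : ℝ → X, IsGeodesic σ x y

/-- The comparison point at parameter `s` on the Euclidean segment from `p` to `q`. -/
noncomputable def cmpPt (p q : EuclideanSpace ℝ (Fin 2)) (s : ℝ) : EuclideanSpace ℝ (Fin 2) :=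
  p + s • (q - p)

/-- A CAT(0) space: a geodesic space in which every geodesic triangle satisfies the
CAT(0) comparison inequality with respect to the Euclidean plane. -/
def IsCAT0 (X : Type*) [MetricSpace X] : Prop :=
  GeodesicMetricSpace X ∧
    ∀ (p q r : X) (σpq σqr σrp : ℝ → X),
      IsGeodesic σpq p q → IsGeodesic σqr q r → IsGeodesic σrp r p →
      ∀ p' q' r' : EuclideanSpace ℝ (Fin 2),
        dist p' q' = dist p q → dist q' r' = dist q r → dist r' p' = dist r p →
        ∀ (i j : Fin 3), ∀ s ∈ Set.Icc (0:ℝ) 1, ∀ t ∈ Set.Icc (0:ℝ) 1,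
          dist (![σpq, σqr, σrp] i s) (![σpq, σqr, σrp] j t) ≤
            dist (![cmpPt p' q', cmpPt q' r', cmpPt r' p'] i s)
                 (![cmpPt p' q', cmpPt q' r', cmpPt r' p'] j t)

/-- `z` is a CAT(-1) point of radius `c > 0`: every geodesic triangle contained in the
open ball `B(z, c)` admits a comparison triangle in the hyperbolic plane `ℍ²` (the upper
half-plane) for which the CAT(-1) comparison inequality holds. -/
def IsCATm1Point {X : Type*} [MetricSpace X] (z : X) (c : ℝ) : Prop :=
  0 < c ∧
    ∀ (p q r : X) (σpq σqr σrp : ℝ → X),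
      IsGeodesic σpq p q → IsGeodesic σqr q r → IsGeodesic σrp r p →
      (∀ s ∈ Set.Icc (0:ℝ) 1, σpq s ∈ Metric.ball z c) →
      (∀ s ∈ Set.Icc (0:ℝ) 1, σqr s ∈ Metric.ball z c) →
      (∀ s ∈ Set.Icc (0:ℝ) 1, σrp s ∈ Metric.ball z c) →
      ∃ (p' q' r' : UpperHalfPlane) (τpq τqr τrp : ℝ → UpperHalfPlane),
        IsGeodesic τpq p' q' ∧ IsGeodesic τqr q' r' ∧ IsGeodesic τrp r' p' ∧
        dist p' q' = dist p q ∧ dist q' r' = dist q r ∧ dist r' p' = dist r p ∧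
        ∀ (i j : Fin 3), ∀ s ∈ Set.Icc (0:ℝ) 1, ∀ t ∈ Set.Icc (0:ℝ) 1,
          dist (![σpq, σqr, σrp] i s) (![σpq, σqr, σrp] j t) ≤
            dist (![τpq, τqr, τrp] i s) (![τpq, τqr, τrp] j t)

/-- A geodesic ray: an isometric embedding of `[0, ∞)`. -/
def IsGeodesicRay {X : Type*} [MetricSpace X] (r : ℝ → X) : Prop :=
  ∀ s t : ℝ, 0 ≤ s → 0 ≤ t → dist (r s) (r t) = |s - t|

/-- A geodesic line: an isometric embedding of `ℝ`. -/
def IsGeodesicLine {X : Type*} [MetricSpace X] (γ : ℝ → X) : Prop :=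
  ∀ s t : ℝ, dist (γ s) (γ t) = |s - t|

/-- Geodesic completeness: every nondegenerate geodesic segment extends to a geodesic line. -/
def GeodesicallyComplete (X : Type*) [MetricSpace X] : Prop :=
  ∀ (x y : X) (σ : ℝ → X), IsGeodesic σ x y → x ≠ y →
    ∃ γ : ℝ → X, IsGeodesicLine γ ∧ ∀ s ∈ Set.Icc (0:ℝ) 1, σ s = γ (s * dist x y)

/-- Cocompactness: some compact set meets every orbit of the isometry group. -/
def Cocompact (X : Type*) [MetricSpace X] : Prop :=
  ∃ K : Set X, IsCompact K ∧ ∀ x : X, ∃ g : X ≃ᵢ X, g x ∈ K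

/-- The set of projections of a point `u` onto a subset `Y`. -/
def projSet {X : Type*} [MetricSpace X] (Y : Set X) (u : X) : Set X :=
  {p ∈ Y | dist u p = Metric.infDist u Y}

/-- `Y` is `B`-contracting: projections of balls disjoint from `Y` have diameter at most `B`. -/
def IsContracting {X : Type*} [MetricSpace X] (Y : Set X) (B : ℝ) : Prop :=
  0 ≤ B ∧
    ∀ (u : X) (ρ : ℝ), Disjoint (Metric.ball u ρ) Y →
      ∀ p q : X, (∃ v ∈ Metric.ball u ρ, p ∈ projSet Y v) →
        (∃ v ∈ Metric.ball u ρ, q ∈ projSet Y v) → dist p q ≤ B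

/-! ### Auxiliary material for the proof -/

open Set

section GeodesicBasics

variable {X : Type*} [MetricSpace X] {σ : ℝ → X} {x y : X}

lemma IsGeodesic.dist_pts (h : IsGeodesic σ x y) {s t : ℝ} (hs : s ∈ Icc (0:ℝ) 1)
    (ht : t ∈ Icc (0:ℝ) 1) : dist (σ s) (σ t) = |s - t| * dist x y :=
  h.2.2 s hs t ht

lemma IsGeodesic.dist_src (h : IsGeodesic σ x y) {s : ℝ} (hs : s ∈ Icc (0:ℝ) 1) :
    dist x (σ s) = s * dist x y := by
  have := h.2.2 0 ⟨le_refl _, zero_le_one⟩ s hs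
  rw [h.1] at this
  rw [dist_comm] at this ⊢
  rw [this, abs_of_nonpos (by linarith [hs.1])]
  ring_nf

lemma IsGeodesic.dist_tgt (h : IsGeodesic σ x y) {s : ℝ} (hs : s ∈ Icc (0:ℝ) 1) :
    dist (σ s) y = (1 - s) * dist x y := by
  have := h.2.2 s hs 1 ⟨zero_le_one, le_refl _⟩
  rw [h.2.1] at this
  rw [this, abs_of_nonpos (by linarith [hs.2])]
  ring_nf

lemma IsGeodesic.symm (h : IsGeodesic σ x y) : IsGeodesic (fun t => σ (1 - t)) y x := by
  refine ⟨by simpa using h.2.1, by simpa using h.1, fun s hs t ht => ?_⟩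
  have := h.2.2 (1 - s) ⟨by linarith [hs.2], by linarith [hs.1]⟩
    (1 - t) ⟨by linarith [ht.2], by linarith [ht.1]⟩
  rw [this, dist_comm x y]
  congr 1
  rw [show (1:ℝ) - s - (1 - t) = -(s - t) by ring, abs_neg]

lemma IsGeodesic.restrict (h : IsGeodesic σ x y) {t₁ t₂ : ℝ} (h₁ : t₁ ∈ Icc (0:ℝ) 1)
    (h₂ : t₂ ∈ Icc (0:ℝ) 1) (hle : t₁ ≤ t₂) :
    IsGeodesic (fun t => σ (t₁ + t * (t₂ - t₁))) (σ t₁) (σ t₂) := by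
  have hd : dist (σ t₁) (σ t₂) = (t₂ - t₁) * dist x y := by
    rw [h.dist_pts h₁ h₂, abs_of_nonpos (by linarith)]; ring_nf
  refine ⟨by norm_num, by norm_num, fun s hs t ht => ?_⟩
  have hmem : ∀ u : ℝ, u ∈ Icc (0:ℝ) 1 → t₁ + u * (t₂ - t₁) ∈ Icc (0:ℝ) 1 := by
    intro u hu
    constructor
    · nlinarith [hu.1, hu.2, h₁.1, h₁.2, h₂.1, h₂.2]
    · nlinarith [hu.1, hu.2, h₁.1, h₁.2, h₂.1, h₂.2]
  rw [h.dist_pts (hmem s hs) (hmem t ht), hd]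
  rw [show t₁ + s * (t₂ - t₁) - (t₁ + t * (t₂ - t₁)) = (s - t) * (t₂ - t₁) by ring,
    abs_mul, abs_of_nonneg (by linarith : (0:ℝ) ≤ t₂ - t₁)]
  ring

lemma IsGeodesic.glue {o z y : X} {σ₁ σ₂ : ℝ → X} (h₁ : IsGeodesic σ₁ o z)
    (h₂ : IsGeodesic σ₂ z y) (hadd : dist o z + dist z y = dist o y)
    (hoz : 0 < dist o z) (hzy : 0 < dist z y) :
    IsGeodesic (fun t => if t ≤ dist o z / dist o y then σ₁ (t * dist o y / dist o z)
      else σ₂ ((t * dist o y - dist o z) / dist z y)) o y := by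
  set ℓ := dist o z with hℓ
  set m := dist z y with hm
  set D := dist o y with hD
  have hDpos : 0 < D := by rw [← hadd]; linarith
  have haux : ∀ s t : ℝ, s ∈ Icc (0:ℝ) 1 → t ∈ Icc (0:ℝ) 1 → s ≤ t →
      dist ((fun t => if t ≤ ℓ / D then σ₁ (t * D / ℓ) else σ₂ ((t * D - ℓ) / m)) s)
        ((fun t => if t ≤ ℓ / D then σ₁ (t * D / ℓ) else σ₂ ((t * D - ℓ) / m)) t)
        = (t - s) * D := by
    intro s t hs ht hst
    simp only
    by_cases hs' : s ≤ ℓ / D <;> by_cases ht' : t ≤ ℓ / D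
    · rw [if_pos hs', if_pos ht']
      have hsm : s * D / ℓ ∈ Icc (0:ℝ) 1 := by
        constructor
        · exact div_nonneg (mul_nonneg hs.1 hDpos.le) hoz.le
        · rw [div_le_one hoz]
          calc s * D ≤ (ℓ / D) * D := by nlinarith [hs.1]
          _ = ℓ := by field_simp
      have htm : t * D / ℓ ∈ Icc (0:ℝ) 1 := by
        constructor
        · exact div_nonneg (mul_nonneg ht.1 hDpos.le) hoz.le
        · rw [div_le_one hoz]
          calc t * D ≤ (ℓ / D) * D := by nlinarith [ht.1]
          _ = ℓ := by field_simp
      rw [h₁.dist_pts hsm htm]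
      rw [show s * D / ℓ - t * D / ℓ = ((s - t) * D) / ℓ by ring, abs_div,
        abs_of_nonneg hoz.le, div_mul_eq_mul_div, div_eq_iff (ne_of_gt hoz)]
      rw [abs_of_nonpos (by nlinarith [hDpos] : (s - t) * D ≤ 0)]
      ring
    · -- cross case
      rw [if_pos hs', if_neg ht']
      push_neg at ht'
      have hsm : s * D / ℓ ∈ Icc (0:ℝ) 1 := by
        constructor
        · exact div_nonneg (mul_nonneg hs.1 hDpos.le) hoz.le
        · rw [div_le_one hoz]
          calc s * D ≤ (ℓ / D) * D := by nlinarith [hs.1]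
          _ = ℓ := by field_simp
      have htm : (t * D - ℓ) / m ∈ Icc (0:ℝ) 1 := by
        constructor
        · apply div_nonneg _ hzy.le
          have : ℓ / D * D ≤ t * D := by nlinarith [hDpos]
          rw [div_mul_cancel₀ _ (ne_of_gt hDpos)] at this
          linarith
        · rw [div_le_one hzy]
          nlinarith [ht.2, hDpos]
      have e1 : dist (σ₁ (s * D / ℓ)) z = (ℓ - s * D) := by
        have := h₁.dist_tgt hsm
        rw [this, ← hℓ, sub_mul, one_mul, div_mul_cancel₀ _ (ne_of_gt hoz)]
      have e2 : dist z (σ₂ ((t * D - ℓ) / m)) = t * D - ℓ := by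
        have := h₂.dist_src htm
        rw [this, ← hm, div_mul_cancel₀ _ (ne_of_gt hzy)]
      have e3 : dist (σ₂ ((t * D - ℓ) / m)) y = D - t * D := by
        have := h₂.dist_tgt htm
        rw [this, ← hm, sub_mul, one_mul, div_mul_cancel₀ _ (ne_of_gt hzy)]
        linarith
      have hub : dist (σ₁ (s * D / ℓ)) (σ₂ ((t * D - ℓ) / m)) ≤ (t - s) * D := by
        calc dist (σ₁ (s * D / ℓ)) (σ₂ ((t * D - ℓ) / m))
            ≤ dist (σ₁ (s * D / ℓ)) z + dist z (σ₂ ((t * D - ℓ) / m)) := dist_triangle _ _ _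
          _ = (t - s) * D := by rw [e1, e2]; ring
      have hlb : (t - s) * D ≤ dist (σ₁ (s * D / ℓ)) (σ₂ ((t * D - ℓ) / m)) := by
        have h4 : dist o (σ₂ ((t * D - ℓ) / m)) ≥ t * D := by
          have := dist_triangle o (σ₂ ((t * D - ℓ) / m)) y
          rw [hD] at hadd ⊢
          nlinarith [e3, this]
        have h5 : dist o (σ₁ (s * D / ℓ)) = s * D := by
          have := h₁.dist_src hsm
          rw [this, ← hℓ, div_mul_cancel₀ _ (ne_of_gt hoz)]
        have := dist_triangle o (σ₁ (s * D / ℓ)) (σ₂ ((t * D - ℓ) / m))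
        linarith
      linarith
    · exfalso; exact hs' (le_trans hst ht')
    · rw [if_neg hs', if_neg ht']
      push_neg at hs'
      have hmem : ∀ u : ℝ, u ∈ Icc (0:ℝ) 1 → ℓ / D < u → (u * D - ℓ) / m ∈ Icc (0:ℝ) 1 := by
        intro u hu hu'
        constructor
        · apply div_nonneg _ hzy.le
          have : ℓ / D * D ≤ u * D := by nlinarith [hDpos]
          rw [div_mul_cancel₀ _ (ne_of_gt hDpos)] at this
          linarith
        · rw [div_le_one hzy]
          nlinarith [hu.2, hDpos]
      rw [h₂.dist_pts (hmem s hs hs') (hmem t ht (lt_of_lt_of_le hs' hst))]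
      rw [show (s * D - ℓ) / m - (t * D - ℓ) / m = ((s - t) * D) / m by ring, abs_div,
        abs_of_nonneg hzy.le, div_mul_eq_mul_div, div_eq_iff (ne_of_gt hzy)]
      rw [abs_of_nonpos (by nlinarith [hDpos] : (s - t) * D ≤ 0)]
      ring
  have h0le : (0:ℝ) ≤ ℓ / D := by positivity
  refine ⟨?_, ?_, fun s hs t ht => ?_⟩
  · simp only [if_pos h0le]
    simpa using h₁.1
  · have : ¬ (1:ℝ) ≤ ℓ / D := by
      rw [not_le, div_lt_one hDpos]
      linarith
    simp only [if_neg this]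
    have : (1 * D - ℓ) / m = 1 := by
      rw [div_eq_one_iff_eq (ne_of_gt hzy)]; linarith
    rw [this]
    exact h₂.2.1
  · rcases le_total s t with hst | hst
    · rw [haux s t hs ht hst, abs_of_nonpos (by linarith)]; ring
    · rw [dist_comm, haux t s ht hs hst, abs_of_nonneg (by linarith : (0:ℝ) ≤ s - t)]

end GeodesicBasics


section EuclideanHelpers

/-- A point of the Euclidean plane. -/
noncomputable def pt2 (a b : ℝ) : EuclideanSpace ℝ (Fin 2) := (WithLp.equiv 2 _).symm ![a, b]

lemma dist_pt2 (a b c d : ℝ) : dist (pt2 a b) (pt2 c d) = √((a-c)^2+(b-d)^2) := by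
  rw [EuclideanSpace.dist_eq]
  simp [pt2, Fin.sum_univ_two, Real.dist_eq, sq_abs]

lemma cmpPt_zero (p q : EuclideanSpace ℝ (Fin 2)) : cmpPt p q 0 = p := by
  simp [cmpPt]

lemma cmpPt_one (p q : EuclideanSpace ℝ (Fin 2)) : cmpPt p q 1 = q := by
  simp [cmpPt]

lemma cmpPt_cross_dist (p q r : EuclideanSpace ℝ (Fin 2)) {s : ℝ} (hs : 0 ≤ s) :
    dist (cmpPt p q s) (cmpPt r p (1 - s)) = s * dist q r := by
  have hvec : cmpPt p q s - cmpPt r p (1 - s) = s • (q - r) := by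
    simp only [cmpPt]
    module
  rw [dist_eq_norm, hvec, norm_smul, Real.norm_eq_abs, abs_of_nonneg hs, dist_eq_norm]

lemma cmpPt_pt2 (a : ℝ) (s : ℝ) : cmpPt (pt2 0 0) (pt2 a 0) s = pt2 (s * a) 0 := by
  simp only [cmpPt, pt2]
  ext i
  fin_cases i <;>
    simp [Matrix.cons_val_zero, Matrix.cons_val_one, Matrix.head_cons,
      mul_comm]

/-- Existence of Euclidean comparison triangles. -/
lemma exists_cmp_triangle {a b c : ℝ} (ha : 0 ≤ a) (hb : 0 ≤ b) (hc : 0 ≤ c)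
    (t1 : b ≤ a + c) (t2 : a ≤ b + c) (t3 : c ≤ a + b) :
    ∃ p q r : EuclideanSpace ℝ (Fin 2), dist p q = a ∧ dist q r = b ∧ dist r p = c := by
  rcases eq_or_lt_of_le ha with ha0 | hapos
  · -- a = 0, so b = c
    have hbc : b = c := le_antisymm (by linarith) (by linarith)
    refine ⟨pt2 0 0, pt2 0 0, pt2 b 0, ?_, ?_, ?_⟩
    · rw [dist_pt2]; simp [← ha0]
    · rw [dist_pt2]
      simp only [zero_sub, sub_zero]
      rw [show (-b)^2 + (0:ℝ)^2 = b^2 by ring, Real.sqrt_sq hb]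
    · rw [dist_pt2]
      simp only [sub_zero]
      rw [show b^2 + (0:ℝ)^2 = b^2 by ring, Real.sqrt_sq hb, hbc]
  · set x0 := (a^2 + c^2 - b^2) / (2*a) with hx0
    have hy0sq : 0 ≤ c^2 - x0^2 := by
      rw [hx0]
      rw [div_pow, sub_nonneg, div_le_iff₀ (by positivity)]
      have key : 0 ≤ ((a+c)^2 - b^2) * (b^2 - (a-c)^2) :=
        mul_nonneg (by nlinarith) (by nlinarith)
      nlinarith [key]
    set y0 := √(c^2 - x0^2) with hy0
    have hy0' : y0^2 = c^2 - x0^2 := Real.sq_sqrt hy0sq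
    refine ⟨pt2 0 0, pt2 a 0, pt2 x0 y0, ?_, ?_, ?_⟩
    · rw [dist_pt2]
      rw [show (0-a)^2 + ((0:ℝ)-0)^2 = a^2 by ring, Real.sqrt_sq hapos.le]
    · rw [dist_pt2]
      have : (a - x0)^2 + (0 - y0)^2 = b^2 := by
        have : (a - x0)^2 + (0 - y0)^2 = a^2 - 2*a*x0 + c^2 := by
          rw [show (0 - y0)^2 = y0^2 by ring, hy0']; ring
        rw [this, hx0]
        field_simp
        ring
      rw [this, Real.sqrt_sq hb]
    · rw [dist_pt2]
      have : (x0 - 0)^2 + (y0 - 0)^2 = c^2 := by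
        rw [show (x0-0)^2 + (y0-0)^2 = x0^2 + y0^2 by ring, hy0']; ring
      rw [this, Real.sqrt_sq hc]

end EuclideanHelpers

section CAT0Consequences

variable {X : Type*} [MetricSpace X]

/-- Convexity of the distance between two geodesics issuing from a common point. -/
lemma cat0_convex_start (hX : IsCAT0 X) {o p q : X} {α β : ℝ → X}
    (hα : IsGeodesic α o p) (hβ : IsGeodesic β o q) {t : ℝ} (ht : t ∈ Set.Icc (0:ℝ) 1) :
    dist (α t) (β t) ≤ t * dist p q := by
  obtain ⟨ξ, hξ⟩ := hX.1 p q
  obtain ⟨p', q', r', e1, e2, e3⟩ :=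
    exists_cmp_triangle (a := dist o p) (b := dist p q) (c := dist q o)
      dist_nonneg dist_nonneg dist_nonneg
      (by rw [dist_comm q o]; nlinarith [dist_triangle p o q, dist_comm p o])
      (by rw [dist_comm q o]; nlinarith [dist_triangle o q p, dist_comm q p])
      (by rw [dist_comm q o]; exact dist_triangle o p q)
  have ht' : 1 - t ∈ Set.Icc (0:ℝ) 1 := ⟨by linarith [ht.2], by linarith [ht.1]⟩
  have key := hX.2 o p q α ξ (fun u => β (1-u)) hα hξ hβ.symm p' q' r' e1 e2 e3
    0 2 t ht (1-t) ht'
  simp only [Matrix.cons_val_zero, Matrix.cons_val_two, Matrix.tail_cons, Matrix.head_cons] at key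
  have : (1:ℝ) - (1 - t) = t := by ring
  rw [this] at key
  calc dist (α t) (β t) ≤ dist (cmpPt p' q' t) (cmpPt r' p' (1-t)) := key
    _ = t * dist q' r' := cmpPt_cross_dist p' q' r' ht.1
    _ = t * dist p q := by rw [e2]

/-- Convexity of the distance between two geodesics with a common endpoint. -/
lemma cat0_convex_end (hX : IsCAT0 X) {o p q : X} {α β : ℝ → X}
    (hα : IsGeodesic α p o) (hβ : IsGeodesic β q o) {t : ℝ} (ht : t ∈ Set.Icc (0:ℝ) 1) :
    dist (α t) (β t) ≤ (1 - t) * dist p q := by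
  have ht' : 1 - t ∈ Set.Icc (0:ℝ) 1 := ⟨by linarith [ht.2], by linarith [ht.1]⟩
  have := cat0_convex_start hX hα.symm hβ.symm ht'
  simp only [show (1:ℝ) - (1-t) = t by ring] at this
  exact this

/-- Convexity of the distance between any two geodesics. -/
lemma cat0_convex_pair (hX : IsCAT0 X) {z y u w : X} {α β : ℝ → X}
    (hα : IsGeodesic α z y) (hβ : IsGeodesic β u w) {t : ℝ} (ht : t ∈ Set.Icc (0:ℝ) 1) :
    dist (α t) (β t) ≤ (1 - t) * dist z u + t * dist y w := by
  obtain ⟨ξ, hξ⟩ := hX.1 z w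
  calc dist (α t) (β t) ≤ dist (α t) (ξ t) + dist (ξ t) (β t) := dist_triangle _ _ _
    _ ≤ t * dist y w + (1 - t) * dist z u := by
        gcongr
        · exact cat0_convex_start hX hα hξ ht
        · exact cat0_convex_end hX hξ hβ ht
    _ = (1 - t) * dist z u + t * dist y w := by ring

/-- Convexity of the distance to a point along a geodesic. -/
lemma cat0_dist_point (hX : IsCAT0 X) {p q : X} {α : ℝ → X}
    (hα : IsGeodesic α p q) (z : X) {t : ℝ} (ht : t ∈ Set.Icc (0:ℝ) 1) :
    dist z (α t) ≤ (1 - t) * dist z p + t * dist z q := by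
  obtain ⟨ξ, hξ⟩ := hX.1 z p
  have hconst : IsGeodesic (fun _ : ℝ => z) z z := by
    refine ⟨rfl, rfl, fun s hs u hu => ?_⟩
    simp
  have := cat0_convex_pair hX hα (hconst) ht
  rw [dist_comm z (α t)]
  calc dist (α t) z ≤ (1 - t) * dist p z + t * dist q z := this
    _ = (1 - t) * dist z p + t * dist z q := by rw [dist_comm p z, dist_comm q z]

/-- The anchored comparison bound: for geodesics `α : o → v` and `β : o → u`, the point
`α s` satisfies the Euclidean law-of-cosines estimate against the far endpoint `u`. -/
lemma cat0_anchored (hX : IsCAT0 X) {o v u : X} {α β : ℝ → X}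
    (hα : IsGeodesic α o v) (hβ : IsGeodesic β o u) {s : ℝ} (hs : s ∈ Set.Icc (0:ℝ) 1)
    (hv : 0 < dist o v) :
    dist (α s) u ^ 2 ≤
      (s * dist o v)^2 - s * ((dist o v)^2 + (dist o u)^2 - (dist v u)^2) + (dist o u)^2 := by
  set a := dist o v with hha
  set b := dist v u with hhb
  set c := dist o u with hhc
  obtain ⟨ξ, hξ⟩ := hX.1 v u
  set x0 := (a^2 + c^2 - b^2) / (2*a) with hx0
  have tri1 : b ≤ a + c := by rw [hha, hhb, hhc, dist_comm o v]; exact dist_triangle v o u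
  have tri2 : a ≤ b + c := by
    rw [hha, hhb, hhc]
    calc dist o v ≤ dist o u + dist u v := dist_triangle _ _ _
      _ = dist v u + dist o u := by rw [dist_comm u v]; ring
  have tri3 : c ≤ a + b := dist_triangle o v u
  have hy0sq : 0 ≤ c^2 - x0^2 := by
    rw [hx0, div_pow, sub_nonneg, div_le_iff₀ (by positivity)]
    have hb0 : 0 ≤ b := dist_nonneg
    have hc0 : 0 ≤ c := dist_nonneg
    have key : 0 ≤ ((a+c)^2 - b^2) * (b^2 - (a-c)^2) :=
      mul_nonneg (by nlinarith) (by nlinarith)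
    nlinarith [key]
  set y0 := √(c^2 - x0^2) with hy0
  have hy0' : y0^2 = c^2 - x0^2 := Real.sq_sqrt hy0sq
  set p' := pt2 0 0
  set q' := pt2 a 0
  set r' := pt2 x0 y0
  have e1 : dist p' q' = a := by
    rw [dist_pt2, show (0-a)^2 + ((0:ℝ)-0)^2 = a^2 by ring, Real.sqrt_sq hv.le]
  have e2 : dist q' r' = b := by
    rw [dist_pt2]
    have : (a - x0)^2 + (0 - y0)^2 = b^2 := by
      have expand : (a - x0)^2 + (0 - y0)^2 = a^2 - 2*a*x0 + c^2 := by
        rw [show (0 - y0)^2 = y0^2 by ring, hy0']; ring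
      rw [expand, hx0]
      field_simp
      ring
    rw [this, Real.sqrt_sq dist_nonneg]
  have e3 : dist r' p' = c := by
    rw [dist_pt2, show (x0-0)^2 + (y0-0)^2 = x0^2 + y0^2 by ring, hy0',
      show x0^2 + (c^2 - x0^2) = c^2 by ring, Real.sqrt_sq dist_nonneg]
  have h01 : (0:ℝ) ∈ Set.Icc (0:ℝ) 1 := ⟨le_refl _, zero_le_one⟩
  have e3c : dist r' p' = dist u o := by rw [dist_comm u o]; exact e3
  have key := hX.2 o v u α ξ (fun u' => β (1-u')) hα hξ hβ.symm p' q' r' e1 e2 e3c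
    0 2 s hs 0 h01
  simp only [Matrix.cons_val_zero, Matrix.cons_val_two, Matrix.tail_cons, Matrix.head_cons] at key
  rw [show (1:ℝ) - 0 = 1 by ring, hβ.2.1] at key
  rw [cmpPt_zero, cmpPt_pt2] at key
  have hdist : dist (pt2 (s*a) 0) r' ^ 2 = (s*a)^2 - s*(a^2 + c^2 - b^2) + c^2 := by
    rw [dist_pt2, Real.sq_sqrt (by positivity)]
    have : (s*a - x0)^2 + (0 - y0)^2 = (s*a)^2 - 2*(s*a)*x0 + c^2 := by
      rw [show (0 - y0)^2 = y0^2 by ring, hy0']; ring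
    rw [this, hx0]
    field_simp
  calc dist (α s) u ^ 2 ≤ dist (pt2 (s*a) 0) r' ^ 2 := by
        apply pow_le_pow_left₀ dist_nonneg key
    _ = (s*a)^2 - s*(a^2 + c^2 - b^2) + c^2 := hdist

end CAT0Consequences


section Analytic

open Real

lemma mul_cosh_sub_sinh_nonneg {t : ℝ} (ht : 0 ≤ t) : 0 ≤ t * Real.cosh t - Real.sinh t := by
  have hmono : MonotoneOn (fun u : ℝ => u * Real.cosh u - Real.sinh u) (Set.Ici 0) := by
    apply monotoneOn_of_deriv_nonneg (convex_Ici 0)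
    · apply Continuous.continuousOn
      continuity
    · intro u hu
      apply DifferentiableAt.differentiableWithinAt
      exact ((differentiableAt_id.mul (Real.differentiable_cosh _)).sub
        (Real.differentiable_sinh _))
    · intro u hu
      rw [interior_Ici] at hu
      have hderiv : HasDerivAt (fun u : ℝ => u * Real.cosh u - Real.sinh u)
          (u * Real.sinh u) u := by
        have h1 : HasDerivAt (fun u : ℝ => u * Real.cosh u)
            (1 * Real.cosh u + u * Real.sinh u) u :=
          (hasDerivAt_id u).mul (Real.hasDerivAt_cosh u)
        have h2 := h1.sub (Real.hasDerivAt_sinh u)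
        exact h2.congr_deriv (by ring)
      rw [hderiv.deriv]
      exact mul_nonneg (le_of_lt hu) (Real.sinh_nonneg_iff.mpr (le_of_lt hu))
  have := hmono (Set.self_mem_Ici) (Set.mem_Ici.mpr ht) ht
  simpa using this

lemma mul_cosh_sub_sinh_pos {t : ℝ} (ht : 0 < t) : 0 < t * Real.cosh t - Real.sinh t := by
  have hmono : StrictMonoOn (fun u : ℝ => u * Real.cosh u - Real.sinh u) (Set.Ici 0) := by
    apply strictMonoOn_of_deriv_pos (convex_Ici 0)
    · apply Continuous.continuousOn
      continuity
    · intro u hu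
      rw [interior_Ici] at hu
      have hderiv : HasDerivAt (fun u : ℝ => u * Real.cosh u - Real.sinh u)
          (u * Real.sinh u) u := by
        have h1 : HasDerivAt (fun u : ℝ => u * Real.cosh u)
            (1 * Real.cosh u + u * Real.sinh u) u :=
          (hasDerivAt_id u).mul (Real.hasDerivAt_cosh u)
        have h2 := h1.sub (Real.hasDerivAt_sinh u)
        exact h2.congr_deriv (by ring)
      rw [hderiv.deriv]
      exact mul_pos hu (Real.sinh_pos_iff.mpr hu)
  have := hmono (Set.self_mem_Ici) (Set.mem_Ici.mpr ht.le) ht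
  simpa using this

lemma sinh_div_strictMono : StrictMonoOn (fun u : ℝ => Real.sinh u / u) (Set.Ioi 0) := by
  apply strictMonoOn_of_deriv_pos (convex_Ioi 0)
  · apply ContinuousOn.div (Real.continuous_sinh.continuousOn) continuousOn_id
    intro u hu
    exact ne_of_gt hu
  · intro u hu
    rw [interior_Ioi] at hu
    have hderiv : HasDerivAt (fun u : ℝ => Real.sinh u / u)
        ((Real.cosh u * u - Real.sinh u * 1) / u ^ 2) u :=
      (Real.hasDerivAt_sinh u).div (hasDerivAt_id u) (ne_of_gt hu)
    rw [hderiv.deriv]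
    apply div_pos _ (pow_pos hu 2)
    have := mul_cosh_sub_sinh_pos hu
    nlinarith

lemma coshSqrt_strictConvex : StrictConvexOn ℝ (Set.Ici 0) (fun t : ℝ => Real.cosh (√t)) := by
  apply StrictMonoOn.strictConvexOn_of_deriv (convex_Ici 0)
  · exact (Real.continuous_cosh.comp Real.continuous_sqrt).continuousOn
  · rw [interior_Ici]
    have hderiv : ∀ t ∈ Set.Ioi (0:ℝ), deriv (fun t : ℝ => Real.cosh (√t)) t
        = Real.sinh (√t) * (1 / (2 * √t)) := by
      intro t ht
      exact ((hasDerivAt_sqrt (ne_of_gt ht)).cosh).deriv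
    intro a ha b hb hab
    rw [hderiv a ha, hderiv b hb]
    have ha' : (0:ℝ) < √a := Real.sqrt_pos.mpr ha
    have hb' : (0:ℝ) < √b := Real.sqrt_pos.mpr hb
    have hsq : √a < √b := Real.sqrt_lt_sqrt (le_of_lt ha) hab
    have := sinh_div_strictMono (Set.mem_Ioi.mpr ha') (Set.mem_Ioi.mpr hb') hsq
    rw [div_lt_div_iff₀ ha' hb'] at this
    rw [mul_one_div, mul_one_div, div_lt_div_iff₀ (by positivity) (by positivity)]
    nlinarith

/-- Strict hyperbolic Pythagoras inequality. -/
lemma cosh_sqrt_lt {x y : ℝ} (hx : 0 < x) (hy : 0 < y) (hxy : x ≠ y) :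
    Real.cosh (√(x^2 + y^2)) < Real.cosh x * Real.cosh y := by
  have hA : ((x+y)^2 : ℝ) ∈ Set.Ici (0:ℝ) := Set.mem_Ici.mpr (by positivity)
  have hB : ((x-y)^2 : ℝ) ∈ Set.Ici (0:ℝ) := Set.mem_Ici.mpr (by positivity)
  have hne : ((x+y)^2 : ℝ) ≠ (x-y)^2 := by
    intro h
    nlinarith [mul_pos hx hy]
  have := coshSqrt_strictConvex.2 hA hB hne (by norm_num : (0:ℝ) < 1/2)
    (by norm_num : (0:ℝ) < 1/2) (by norm_num)
  simp only [smul_eq_mul] at this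
  have e0 : (1/2 : ℝ) * (x+y)^2 + (1/2 : ℝ) * (x-y)^2 = x^2 + y^2 := by ring
  rw [e0] at this
  have e1 : √((x+y)^2) = x + y := Real.sqrt_sq (by positivity)
  have e2 : Real.cosh (√((x-y)^2)) = Real.cosh (x - y) := by
    rw [Real.sqrt_sq_eq_abs, Real.cosh_abs]
  rw [e1] at this
  rw [e2] at this
  rw [Real.cosh_add, Real.cosh_sub] at this
  calc Real.cosh (√(x^2+y^2)) < 1/2 * (Real.cosh x * Real.cosh y + Real.sinh x * Real.sinh y)
        + 1/2 * (Real.cosh x * Real.cosh y - Real.sinh x * Real.sinh y) := this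
    _ = Real.cosh x * Real.cosh y := by ring

/-- A crude Lipschitz bound for `cosh` on `[0, M]`. -/
lemma cosh_sub_cosh_le {a b M : ℝ} (ha : 0 ≤ a) (hab : a ≤ b) (hbM : b ≤ M) :
    Real.cosh b - Real.cosh a ≤ (b - a) * Real.exp M := by
  have h1 : Real.exp b - Real.exp a ≤ (b - a) * Real.exp b := by
    have := Real.add_one_le_exp (a - b)
    have hpos : (0:ℝ) < Real.exp b := Real.exp_pos b
    have : Real.exp b * ((a - b) + 1) ≤ Real.exp b * Real.exp (a - b) := by
      apply mul_le_mul_of_nonneg_left this hpos.le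
    rw [← Real.exp_add] at this
    have heq : b + (a - b) = a := by ring
    rw [heq] at this
    nlinarith
  have h2 : Real.exp (-b) - Real.exp (-a) ≤ 0 := by
    have := Real.exp_le_exp.mpr (neg_le_neg hab)
    linarith
  have h3 : Real.exp b ≤ Real.exp M := Real.exp_le_exp.mpr hbM
  rw [Real.cosh_eq, Real.cosh_eq]
  have hba : 0 ≤ b - a := by linarith
  have hint1 := mul_le_mul_of_nonneg_left h3 hba
  have hint2 := mul_nonneg hba (Real.exp_pos M).le
  linarith

lemma sqrt_sq_add_sq_le {d e' e : ℝ} (hd : 0 ≤ d) (he' : 0 ≤ e') (he : 0 ≤ e) :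
    √(d^2 + (e' + e)^2) ≤ √(d^2 + e'^2) + e := by
  have hbase : e' ≤ √(d^2 + e'^2) :=
    calc e' = √(e'^2) := (Real.sqrt_sq he').symm
    _ ≤ √(d^2+e'^2) := Real.sqrt_le_sqrt (by nlinarith)
  have h2 : √(d^2 + (e'+e)^2) ≤ √((√(d^2+e'^2) + e)^2) := by
    apply Real.sqrt_le_sqrt
    have hs := Real.sq_sqrt (show (0:ℝ) ≤ d^2+e'^2 by positivity)
    nlinarith
  rw [Real.sqrt_sq (by positivity)] at h2
  exact h2

end Analytic


section HyperbolicMedian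

lemma coshdist_coords (z w : UpperHalfPlane) :
    Real.cosh (dist z w) = 1 + ((z.re - w.re)^2 + (z.im - w.im)^2) / (2 * z.im * w.im) := by
  rw [UpperHalfPlane.cosh_dist, Complex.dist_eq_re_im]
  rw [Real.sq_sqrt (by positivity)]
  norm_num [UpperHalfPlane.coe_re, UpperHalfPlane.coe_im]

set_option maxHeartbeats 1600000 in
lemma median_core (a1 b1 a2 b2 mx my ux uy C : ℝ)
    (hb1 : 0 < b1) (hb2 : 0 < b2) (hmy : 0 < my) (huy : 0 < uy) (hC : 1 ≤ C)
    (e1 : (a1-mx)^2 + (b1-my)^2 = 2*b1*my*(C-1))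
    (e2 : (mx-a2)^2 + (my-b2)^2 = 2*my*b2*(C-1))
    (ePQ : (a1-a2)^2 + (b1-b2)^2 = 4*b1*b2*(C^2-1)) :
    (1 + ((ux-mx)^2+(uy-my)^2)/(2*uy*my)) * C
      = ((1 + ((ux-a1)^2+(uy-b1)^2)/(2*uy*b1)) + (1 + ((ux-a2)^2+(uy-b2)^2)/(2*uy*b2)))/2 := by
  have hb12 : 0 < b1 + b2 := by linarith
  rcases eq_or_lt_of_le hC with hCeq | hClt
  · -- degenerate case C = 1
    have hz1 : (a1-mx)^2 + (b1-my)^2 = 0 := by rw [← hCeq] at e1; linarith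
    have hz2 : (a1-a2)^2 + (b1-b2)^2 = 0 := by rw [← hCeq] at ePQ; nlinarith
    have h1' : mx = a1 := by nlinarith [sq_nonneg (a1-mx), sq_nonneg (b1-my)]
    have h2' : my = b1 := by nlinarith [sq_nonneg (a1-mx), sq_nonneg (b1-my)]
    have h3' : a2 = a1 := by nlinarith [sq_nonneg (a1-a2), sq_nonneg (b1-b2)]
    have h4' : b2 = b1 := by nlinarith [sq_nonneg (a1-a2), sq_nonneg (b1-b2)]
    rw [h1', h2', h3', h4', ← hCeq]
    field_simp
    ring
  · have hs2 : 0 < C^2 - 1 := by nlinarith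
    have circ1 : (mx-a1)^2 + (my-C*b1)^2 = (C^2-1)*b1^2 := by linear_combination e1
    have circ2 : (mx-a2)^2 + (my-C*b2)^2 = (C^2-1)*b2^2 := by linear_combination e2
    have hcent : (a1-a2)^2 + (C*b1-C*b2)^2 = (C^2-1)*(b1+b2)^2 := by linear_combination ePQ
    have hfval : (mx-a1)*(a2-a1) + (my-C*b1)*(C*b2-C*b1) = (C^2-1)*b1*(b1+b2) := by
      linear_combination (1/2)*circ1 - (1/2)*circ2 + (1/2)*hcent
    have hgsq : ((mx-a1)*(C*b2-C*b1) - (my-C*b1)*(a2-a1))^2 = 0 := by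
      linear_combination ((a1-a2)^2+(C*b1-C*b2)^2) * circ1 + ((C^2-1)*b1^2) * hcent
        - ((mx-a1)*(a2-a1) + (my-C*b1)*(C*b2-C*b1) + (C^2-1)*b1*(b1+b2)) * hfval
    have hg : (mx-a1)*(C*b2-C*b1) - (my-C*b1)*(a2-a1) = 0 :=
      (pow_eq_zero_iff two_ne_zero).mp hgsq
    have ht : (C^2-1)*(b1+b2) ≠ 0 := ne_of_gt (mul_pos hs2 hb12)
    have hmxlin : ((mx-a1)*(b1+b2)) * ((C^2-1)*(b1+b2))
        = (b1*(a2-a1)) * ((C^2-1)*(b1+b2)) := by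
      linear_combination (a2-a1)*hfval + (C*b2-C*b1)*hg - (mx-a1)*hcent
    have hmxf2 : mx*(b1+b2) = a1*b2 + a2*b1 := by
      have hcan := mul_right_cancel₀ ht hmxlin
      linear_combination hcan
    have hmylin : ((my-C*b1)*(b1+b2)) * ((C^2-1)*(b1+b2))
        = (C*b1*(b2-b1)) * ((C^2-1)*(b1+b2)) := by
      linear_combination (C*b2-C*b1)*hfval - (a2-a1)*hg - (my-C*b1)*hcent
    have hmyf2 : my*(b1+b2) = 2*C*b1*b2 := by
      have hcan := mul_right_cancel₀ ht hmylin
      linear_combination hcan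
    have q3big : ((mx^2+my^2)*(b1+b2)) * (b1+b2)
        = ((a1^2+b1^2)*b2 + (a2^2+b2^2)*b1) * (b1+b2) := by
      linear_combination (mx*(b1+b2) + (a1*b2+a2*b1))*hmxf2
        + (my*(b1+b2) + 2*C*b1*b2)*hmyf2 - b1*b2*ePQ
    have q3p : (mx^2+my^2)*(b1+b2) = (a1^2+b1^2)*b2 + (a2^2+b2^2)*b1 :=
      mul_right_cancel₀ (ne_of_gt hb12) q3big
    have hG : C*2*b1*b2*(2*uy*my + ((ux-mx)^2 + (uy-my)^2))
        = my*( b2*((ux-a1)^2+(uy-b1)^2) + b1*((ux-a2)^2+(uy-b2)^2) + 4*uy*b1*b2 ) := by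
      linear_combination (-(ux^2+uy^2)-(mx^2+my^2)+2*ux*mx) * hmyf2 - 2*ux*my*hmxf2 + my*q3p
    have lhs_eq : (1 + ((ux-mx)^2+(uy-my)^2)/(2*uy*my)) * C
        = (C*2*b1*b2*(2*uy*my + ((ux-mx)^2 + (uy-my)^2))) / (4*uy*my*b1*b2) := by
      field_simp
      ring
    have rhs_eq : ((1 + ((ux-a1)^2+(uy-b1)^2)/(2*uy*b1)) + (1 + ((ux-a2)^2+(uy-b2)^2)/(2*uy*b2)))/2
        = (my*( b2*((ux-a1)^2+(uy-b1)^2) + b1*((ux-a2)^2+(uy-b2)^2) + 4*uy*b1*b2 ))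
          / (4*uy*my*b1*b2) := by
      field_simp
      ring
    rw [lhs_eq, rhs_eq, hG]

/-- The hyperbolic median identity: if `M` is the metric midpoint of `P` and `Q` in the
upper half-plane, then `cosh d(U,M) cosh (d(P,Q)/2) = (cosh d(U,P) + cosh d(U,Q))/2`. -/
lemma median_identity (P Q M U : UpperHalfPlane)
    (h1 : dist P M = dist P Q / 2) (h2 : dist M Q = dist P Q / 2) :
    Real.cosh (dist U M) * Real.cosh (dist P Q / 2)
      = (Real.cosh (dist U P) + Real.cosh (dist U Q)) / 2 := by
  have hb1 : 0 < P.im := UpperHalfPlane.im_pos P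
  have hb2 : 0 < Q.im := UpperHalfPlane.im_pos Q
  have hmy : 0 < M.im := UpperHalfPlane.im_pos M
  have huy : 0 < U.im := UpperHalfPlane.im_pos U
  have hC : 1 ≤ Real.cosh (dist P Q / 2) := Real.one_le_cosh _
  have e1 : (P.re - M.re)^2 + (P.im - M.im)^2
      = 2*P.im*M.im*(Real.cosh (dist P Q / 2) - 1) := by
    have h := coshdist_coords P M
    rw [h1] at h
    have h' : ((P.re - M.re)^2 + (P.im - M.im)^2) / (2*P.im*M.im)
        = Real.cosh (dist P Q / 2) - 1 := by linarith
    rw [div_eq_iff (by positivity : (2*P.im*M.im) ≠ 0)] at h'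
    linarith
  have e2 : (M.re - Q.re)^2 + (M.im - Q.im)^2
      = 2*M.im*Q.im*(Real.cosh (dist P Q / 2) - 1) := by
    have h := coshdist_coords M Q
    rw [h2] at h
    have h' : ((M.re - Q.re)^2 + (M.im - Q.im)^2) / (2*M.im*Q.im)
        = Real.cosh (dist P Q / 2) - 1 := by linarith
    rw [div_eq_iff (by positivity : (2*M.im*Q.im) ≠ 0)] at h'
    linarith
  have hcoshPQ : Real.cosh (dist P Q) = 2*(Real.cosh (dist P Q / 2))^2 - 1 := by
    have hsplit : dist P Q = dist P Q / 2 + dist P Q / 2 := by ring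
    nth_rewrite 1 [hsplit]
    rw [Real.cosh_add]
    linear_combination (Real.sinh_sq (dist P Q / 2))
  have ePQ : (P.re - Q.re)^2 + (P.im - Q.im)^2
      = 4*P.im*Q.im*((Real.cosh (dist P Q / 2))^2 - 1) := by
    have h := coshdist_coords P Q
    rw [hcoshPQ] at h
    have h' : ((P.re - Q.re)^2 + (P.im - Q.im)^2) / (2*P.im*Q.im)
        = 2*(Real.cosh (dist P Q / 2))^2 - 2 := by linarith
    rw [div_eq_iff (by positivity : (2*P.im*Q.im) ≠ 0)] at h'
    linarith
  have core := median_core P.re P.im Q.re Q.im M.re M.im U.re U.im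
    (Real.cosh (dist P Q / 2)) hb1 hb2 hmy huy hC e1 e2 ePQ
  rw [coshdist_coords U M, coshdist_coords U P, coshdist_coords U Q]
  exact core

end HyperbolicMedian


set_option maxHeartbeats 4000000 in
/-- Lemma 3.4. In a nonempty cocompact proper CAT(0) space, for all
`R, ε, c > 0` there exists `k > 0` such that, whenever `z` lies on a geodesic from `o`
to `y`, `d(x, y) ≤ R`, `d(z, y) ≥ k`, and `z` is a CAT(-1) point of radius `c`, every
geodesic from `o` to `x` meets the open ball of radius `ε` around `z`. -/
theorem geodesic_meets_ball_of_CATm1_point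
    (X : Type*) [MetricSpace X] [Nonempty X] [ProperSpace X]
    (hCAT0 : IsCAT0 X) (hcocompact : Cocompact X)
    (R ε c : ℝ) (hR : 0 < R) (hε : 0 < ε) (hc : 0 < c) :
    ∃ k : ℝ, 0 < k ∧
      ∀ o z y x : X,
        dist o z + dist z y = dist o y →
        dist x y ≤ R → k ≤ dist z y →
        IsCATm1Point z c →
        ∀ σ : ℝ → X, IsGeodesic σ o x →
          ∃ s ∈ Set.Icc (0:ℝ) 1, dist (σ s) z < ε := by
  classical
  -- Constants
  set ε' : ℝ := min ε (min c 1) / 4 with hε'def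
  have hε'pos : 0 < ε' := by
    have : 0 < min ε (min c 1) := lt_min hε (lt_min hc one_pos)
    positivity
  set δ : ℝ := ε' / 2 with hδdef
  have hδpos : 0 < δ := by positivity
  have hδltε' : δ < ε' := by rw [hδdef]; linarith
  have hε'ltε : ε' < ε := by
    rw [hε'def]
    have h1 : min ε (min c 1) ≤ ε := min_le_left _ _
    linarith
  have hε'c : ε' ≤ c / 4 := by
    rw [hε'def]
    have h1 : min ε (min c 1) ≤ c := le_trans (min_le_right _ _) (min_le_left _ _)
    linarith
  set ρ : ℝ := Real.cosh δ * Real.cosh ε' - Real.cosh (√(δ^2 + ε'^2)) with hρdef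
  have hρpos : 0 < ρ := by
    have := cosh_sqrt_lt hδpos hε'pos (ne_of_lt hδltε')
    rw [hρdef]; linarith
  set M0 : ℝ := δ + ε' + 1 with hM0def
  set e0 : ℝ := min 1 (ρ / Real.exp M0) with he0def
  have he0pos : 0 < e0 := lt_min one_pos (by positivity)
  have he0le1 : e0 ≤ 1 := min_le_left _ _
  have he0exp : e0 * Real.exp M0 ≤ ρ := by
    have h1 : e0 ≤ ρ / Real.exp M0 := min_le_right _ _
    have h2 : 0 < Real.exp M0 := Real.exp_pos _
    calc e0 * Real.exp M0 ≤ (ρ / Real.exp M0) * Real.exp M0 :=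
          mul_le_mul_of_nonneg_right h1 h2.le
      _ = ρ := by field_simp
  set k : ℝ := 2*δ*R/e0 + R + δ + ε + 1 with hkdef
  have hkpos : 0 < k := by positivity
  have hke0 : 2*δ*R/k ≤ e0 := by
    rw [div_le_iff₀ hkpos, hkdef]
    have h2 : e0 * (2*δ*R/e0) = 2*δ*R := by field_simp
    nlinarith [mul_pos he0pos (add_pos (add_pos (add_pos hR hδpos) hε) one_pos)]
  refine ⟨k, hkpos, ?_⟩
  intro o z y x hbetween hxy hkzy hCATm1 σ hσ
  by_contra hcon
  push_neg at hcon
  -- hcon : ∀ s ∈ Set.Icc 0 1, ε ≤ dist (σ s) z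
  have hoz_ge : ε ≤ dist o z := by
    have h := hcon 0 ⟨le_refl _, zero_le_one⟩
    rwa [hσ.1] at h
  have hℓpos : 0 < dist o z := lt_of_lt_of_le hε hoz_ge
  have hzy_pos : 0 < dist z y := lt_of_lt_of_le hkpos hkzy
  have hLγ_eq : dist o y = dist o z + dist z y := hbetween.symm
  have hLγpos : 0 < dist o y := by rw [hLγ_eq]; linarith
  have hδk : δ ≤ k := by
    rw [hkdef]
    have h1 : 0 < 2*δ*R/e0 := by positivity
    linarith
  have hδdzy : δ ≤ dist z y := le_trans hδk hkzy
  -- glued geodesic from o to y through z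
  obtain ⟨σ₁, hσ₁⟩ := hCAT0.1 o z
  obtain ⟨σ₂, hσ₂⟩ := hCAT0.1 z y
  set γ : ℝ → X := fun t => if t ≤ dist o z / dist o y then σ₁ (t * dist o y / dist o z)
      else σ₂ ((t * dist o y - dist o z) / dist z y) with hγdef
  have hγ : IsGeodesic γ o y := hσ₁.glue hσ₂ hbetween hℓpos hzy_pos
  set t0 : ℝ := dist o z / dist o y with ht0def
  have ht0mem : t0 ∈ Set.Icc (0:ℝ) 1 := by
    constructor
    · positivity
    · rw [ht0def, div_le_one hLγpos, hLγ_eq]; linarith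
  have hγt0 : γ t0 = z := by
    rw [hγdef]
    simp only [if_pos (le_refl t0)]
    have harg : t0 * dist o y / dist o z = 1 := by
      rw [ht0def]; field_simp
    rw [harg, hσ₁.2.1]
  -- the geodesic from y to x and the family of geodesics from o
  obtain ⟨τ, hτ⟩ := hCAT0.1 y x
  choose G hG using fun s : ℝ => hCAT0.1 o (τ s)
  set η : ℝ → ℝ → X := fun s => if s = 0 then γ else if s = 1 then σ else G s with hηdef
  have hτR : ∀ s ∈ Set.Icc (0:ℝ) 1, dist y (τ s) ≤ R := by
    intro s hs
    rw [hτ.dist_src hs]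
    calc s * dist y x ≤ 1 * dist y x :=
          mul_le_mul_of_nonneg_right hs.2 dist_nonneg
      _ = dist y x := one_mul _
      _ ≤ R := by rwa [dist_comm]
  have hη_geo : ∀ s : ℝ, IsGeodesic (η s) o (τ s) := by
    intro s
    rw [hηdef]
    simp only
    by_cases h0 : s = 0
    · rw [if_pos h0, h0, hτ.1]; exact hγ
    · rw [if_neg h0]
      by_cases h1 : s = 1
      · rw [if_pos h1, h1, hτ.2.1]; exact hσ
      · rw [if_neg h1]; exact hG s
  have hLnear : ∀ s ∈ Set.Icc (0:ℝ) 1, |dist o (τ s) - dist o y| ≤ R := by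
    intro s hs
    calc |dist o (τ s) - dist o y| = |dist (τ s) o - dist y o| := by
          rw [dist_comm o (τ s), dist_comm o y]
      _ ≤ dist (τ s) y := abs_dist_sub_le _ _ _
      _ = dist y (τ s) := dist_comm _ _
      _ ≤ R := hτR s hs
  have hLbig : ∀ s ∈ Set.Icc (0:ℝ) 1, dist o z + δ ≤ dist o (τ s) := by
    intro s hs
    have h2 := (abs_le.mp (hLnear s hs)).1
    have hkR : R + δ ≤ k := by
      rw [hkdef]
      have h1 : 0 < 2*δ*R/e0 := by positivity
      linarith
    rw [hLγ_eq] at h2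
    linarith [hkzy]
  have hLpos : ∀ s ∈ Set.Icc (0:ℝ) 1, 0 < dist o (τ s) := by
    intro s hs
    linarith [hLbig s hs, hδpos, hℓpos]
  have hparam : ∀ s ∈ Set.Icc (0:ℝ) 1, dist o z / dist o (τ s) ∈ Set.Icc (0:ℝ) 1 := by
    intro s hs
    have h1 := hLpos s hs
    have h2 := hLbig s hs
    constructor
    · positivity
    · rw [div_le_one h1]; linarith
  set φ : ℝ → ℝ := fun s => dist (η s (dist o z / dist o (τ s))) z with hφdef
  have hφ0 : φ 0 = 0 := by
    rw [hφdef]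
    simp only
    have hη0 : η 0 = γ := by rw [hηdef]; simp
    have hL0 : dist o (τ 0) = dist o y := by rw [hτ.1]
    rw [hη0, hL0, ← ht0def, hγt0, dist_self]
  have hφ1 : ε ≤ φ 1 := by
    rw [hφdef]
    simp only
    have hη1 : η 1 = σ := by rw [hηdef]; simp
    rw [hη1]
    exact hcon _ (hparam 1 ⟨zero_le_one, le_refl _⟩)
  -- Lipschitz continuity of φ on [0,1]
  have hφlip : ∀ s ∈ Set.Icc (0:ℝ) 1, ∀ s' ∈ Set.Icc (0:ℝ) 1,
      dist (φ s) (φ s') ≤ (2*R) * dist s s' := by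
    intro s hs s' hs'
    have hLs := hLpos s hs
    have hLs' := hLpos s' hs'
    have hww : dist (τ s) (τ s') ≤ R * dist s s' := by
      rw [hτ.dist_pts hs hs', Real.dist_eq]
      calc |s - s'| * dist y x ≤ |s - s'| * R :=
            mul_le_mul_of_nonneg_left (by rwa [dist_comm] at hxy) (abs_nonneg _)
        _ = R * |s - s'| := mul_comm _ _
    have hterm1 : dist (η s (dist o z / dist o (τ s))) (η s' (dist o z / dist o (τ s)))
        ≤ R * dist s s' := by
      calc dist (η s (dist o z / dist o (τ s))) (η s' (dist o z / dist o (τ s)))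
          ≤ (dist o z / dist o (τ s)) * dist (τ s) (τ s') :=
            cat0_convex_start hCAT0 (hη_geo s) (hη_geo s') (hparam s hs)
        _ ≤ 1 * dist (τ s) (τ s') :=
            mul_le_mul_of_nonneg_right (hparam s hs).2 dist_nonneg
        _ = dist (τ s) (τ s') := one_mul _
        _ ≤ R * dist s s' := hww
    have hterm2 : dist (η s' (dist o z / dist o (τ s))) (η s' (dist o z / dist o (τ s')))
        ≤ R * dist s s' := by
      have hLL : |dist o (τ s) - dist o (τ s')| ≤ R * dist s s' := by
        calc |dist o (τ s) - dist o (τ s')| = |dist (τ s) o - dist (τ s') o| := by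
              rw [dist_comm o (τ s), dist_comm o (τ s')]
          _ ≤ dist (τ s) (τ s') := abs_dist_sub_le _ _ _
          _ ≤ R * dist s s' := hww
      calc dist (η s' (dist o z / dist o (τ s))) (η s' (dist o z / dist o (τ s')))
          = |dist o z / dist o (τ s) - dist o z / dist o (τ s')| * dist o (τ s') :=
            (hη_geo s').dist_pts (hparam s hs) (hparam s' hs')
        _ = (dist o z / dist o (τ s)) * |dist o (τ s') - dist o (τ s)| := by
            rw [show dist o z / dist o (τ s) - dist o z / dist o (τ s')
                = dist o z * (dist o (τ s') - dist o (τ s)) / (dist o (τ s) * dist o (τ s')) by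
              field_simp]
            rw [abs_div, abs_mul, abs_of_pos (mul_pos hLs hLs'), abs_of_pos hℓpos]
            field_simp
        _ ≤ 1 * |dist o (τ s') - dist o (τ s)| :=
            mul_le_mul_of_nonneg_right (hparam s hs).2 (abs_nonneg _)
        _ = |dist o (τ s) - dist o (τ s')| := by rw [one_mul, abs_sub_comm]
        _ ≤ R * dist s s' := hLL
    calc dist (φ s) (φ s')
        ≤ dist (η s (dist o z / dist o (τ s))) (η s' (dist o z / dist o (τ s'))) := by
          rw [hφdef, Real.dist_eq]
          exact abs_dist_sub_le _ _ _
      _ ≤ dist (η s (dist o z / dist o (τ s))) (η s' (dist o z / dist o (τ s)))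
            + dist (η s' (dist o z / dist o (τ s))) (η s' (dist o z / dist o (τ s'))) :=
          dist_triangle _ _ _
      _ ≤ R * dist s s' + R * dist s s' := add_le_add hterm1 hterm2
      _ = (2*R) * dist s s' := by ring
  have hφcont : ContinuousOn φ (Set.Icc (0:ℝ) 1) := by
    apply LipschitzOnWith.continuousOn (K := Real.toNNReal (2*R))
    rw [lipschitzOnWith_iff_dist_le_mul]
    intro s hs s' hs'
    calc dist (φ s) (φ s') ≤ (2*R) * dist s s' := hφlip s hs s' hs'
      _ = (Real.toNNReal (2*R)) * dist s s' := by
          rw [Real.coe_toNNReal _ (by positivity)]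
  -- Intermediate value: find s* with φ s* = ε'
  have hIVT := intermediate_value_Icc zero_le_one hφcont
  have hε'mem : ε' ∈ Set.Icc (φ 0) (φ 1) := by
    constructor
    · rw [hφ0]; exact hε'pos.le
    · linarith [hφ1, hε'ltε]
  obtain ⟨sstar, hsstar, hφstar⟩ := hIVT hε'mem
  -- notation for the chosen geodesic
  have hLs := hLpos sstar hsstar
  have hLbigs := hLbig sstar hsstar
  set Ls : ℝ := dist o (τ sstar) with hLsdef
  set tu : ℝ := dist o z / Ls with htudef
  have htumem : tu ∈ Set.Icc (0:ℝ) 1 := hparam sstar hsstar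
  set u : X := η sstar tu with hudef
  have hu_z : dist u z = ε' := hφstar
  have hηs := hη_geo sstar
  have hou : dist o u = dist o z := by
    rw [hudef, hηs.dist_src htumem, htudef, ← hLsdef]
    field_simp
  -- the points a, b on γ and u2 on η sstar
  set ta : ℝ := (dist o z - δ) / dist o y with htadef
  set tb : ℝ := (dist o z + δ) / dist o y with htbdef
  set tb' : ℝ := (dist o z + δ) / Ls with htb'def
  have htamem : ta ∈ Set.Icc (0:ℝ) 1 := by
    constructor
    · rw [htadef]
      apply div_nonneg _ hLγpos.le
      linarith [hδltε', hε'ltε, hoz_ge]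
    · rw [htadef, div_le_one hLγpos, hLγ_eq]
      linarith
  have htbmem : tb ∈ Set.Icc (0:ℝ) 1 := by
    constructor
    · rw [htbdef]; positivity
    · rw [htbdef, div_le_one hLγpos, hLγ_eq]
      linarith
  have htb'mem : tb' ∈ Set.Icc (0:ℝ) 1 := by
    constructor
    · rw [htb'def]; positivity
    · rw [htb'def, div_le_one hLs]
      linarith
  set a : X := γ ta with hadef
  set b : X := γ tb with hbdef
  set u2 : X := η sstar tb' with hu2def
  have ht0γ : t0 ∈ Set.Icc (0:ℝ) 1 := ht0mem
  have hdaz : dist a z = δ := by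
    rw [hadef, ← hγt0, hγ.dist_pts htamem ht0γ, htadef, ht0def]
    rw [show (dist o z - δ) / dist o y - dist o z / dist o y = -δ / dist o y by ring]
    rw [abs_div, abs_neg, abs_of_pos hδpos, abs_of_pos hLγpos]
    field_simp
  have hdzb : dist z b = δ := by
    rw [hbdef, ← hγt0, hγ.dist_pts ht0γ htbmem, htbdef, ht0def]
    rw [show dist o z / dist o y - (dist o z + δ) / dist o y = -δ / dist o y by ring]
    rw [abs_div, abs_neg, abs_of_pos hδpos, abs_of_pos hLγpos]
    field_simp
  have hdab : dist a b = 2*δ := by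
    rw [hadef, hbdef, hγ.dist_pts htamem htbmem, htadef, htbdef]
    rw [show (dist o z - δ) / dist o y - (dist o z + δ) / dist o y = -(2*δ) / dist o y by ring]
    rw [abs_div, abs_neg, abs_of_pos (by positivity : (0:ℝ) < 2*δ), abs_of_pos hLγpos]
    field_simp
  have hduu2 : dist u u2 = δ := by
    rw [hudef, hu2def, hηs.dist_pts htumem htb'mem, htudef, htb'def, ← hLsdef]
    rw [show dist o z / Ls - (dist o z + δ) / Ls = -δ / Ls by ring]
    rw [abs_div, abs_neg, abs_of_pos hδpos, abs_of_pos hLs]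
    field_simp
  have hou2 : dist o u2 = dist o z + δ := by
    rw [hu2def, hηs.dist_src htb'mem, htb'def, ← hLsdef]
    field_simp
  -- bound on D2 = dist b u2
  have hD2 : dist b u2 ≤ ε' + e0 := by
    -- tail geodesics
    have hγT := hγ.restrict ht0γ ⟨zero_le_one, le_refl _⟩ ht0mem.2
    rw [hγt0, hγ.2.1] at hγT
    have hηT := hηs.restrict htumem ⟨zero_le_one, le_refl _⟩ htumem.2
    rw [← hudef, hηs.2.1] at hηT
    set lam : ℝ := δ / dist z y with hlamdef
    have hlammem : lam ∈ Set.Icc (0:ℝ) 1 := by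
      constructor
      · rw [hlamdef]; positivity
      · rw [hlamdef, div_le_one hzy_pos]; exact hδdzy
    have hpair := cat0_convex_pair hCAT0 hγT hηT hlammem
    -- identify γ-tail point with b
    have hγTb : γ (t0 + lam * (1 - t0)) = b := by
      rw [hbdef]
      congr 1
      rw [ht0def, hlamdef, htbdef, hLγ_eq]
      have h1 : dist z y ≠ 0 := ne_of_gt hzy_pos
      have h2 : dist o z + dist z y ≠ 0 := by positivity
      field_simp
      try ring
    rw [hγTb] at hpair
    -- distance from η-tail point to u2
    have hηTpt : dist (η sstar (tu + lam * (1 - tu))) u2 ≤ δ * R / k := by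
      have hmem1 : tu + lam * (1 - tu) ∈ Set.Icc (0:ℝ) 1 := by
        constructor
        · have := mul_nonneg hlammem.1 (by linarith [htumem.2] : (0:ℝ) ≤ 1 - tu)
          linarith [htumem.1]
        · have h1 : lam * (1 - tu) ≤ 1 * (1 - tu) :=
            mul_le_mul_of_nonneg_right hlammem.2 (by linarith [htumem.2])
          linarith
      rw [hu2def, hηs.dist_pts hmem1 htb'mem]
      have harg : tu + lam * (1 - tu) - tb' = (lam * (Ls - dist o z) - δ) / Ls := by
        rw [htudef, htb'def]
        field_simp
        try ring
      rw [harg, abs_div, abs_of_pos hLs, div_mul_cancel₀ _ (ne_of_gt hLs)]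
      have hval : lam * (Ls - dist o z) - δ = δ * (Ls - dist o y) / dist z y := by
        rw [hlamdef, hLγ_eq]
        field_simp
        ring
      rw [hval, abs_div, abs_of_pos hzy_pos]
      rw [div_le_div_iff₀ hzy_pos hkpos]
      calc |δ * (Ls - dist o y)| * k = δ * |Ls - dist o y| * k := by
            rw [abs_mul, abs_of_pos hδpos]
        _ ≤ δ * R * k := by
            have h5 := hLnear sstar hsstar
            rw [← hLsdef] at h5
            have h6 : δ * |Ls - dist o y| ≤ δ * R :=
              mul_le_mul_of_nonneg_left h5 hδpos.le
            exact mul_le_mul_of_nonneg_right h6 hkpos.le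
        _ ≤ δ * R * dist z y :=
            mul_le_mul_of_nonneg_left hkzy (by positivity)
    calc dist b u2 ≤ dist b (η sstar (tu + lam * (1 - tu)))
          + dist (η sstar (tu + lam * (1 - tu))) u2 := dist_triangle _ _ _
      _ ≤ ((1 - lam) * dist z u + lam * dist y (τ sstar)) + δ * R / k := by
          exact add_le_add hpair hηTpt
      _ ≤ ε' + δ*R/k + δ*R/k := by
          have h1 : (1 - lam) * dist z u ≤ ε' := by
            rw [dist_comm z u, hu_z]
            calc (1 - lam) * ε' ≤ 1 * ε' :=
                mul_le_mul_of_nonneg_right (by linarith [hlammem.1]) hε'pos.le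
              _ = ε' := one_mul _
          have h2 : lam * dist y (τ sstar) ≤ δ*R/k := by
            rw [hlamdef, div_mul_eq_mul_div, div_le_div_iff₀ hzy_pos hkpos]
            have h3 := hτR sstar hsstar
            calc δ * dist y (τ sstar) * k ≤ δ * R * k := by
                  have h6 : δ * dist y (τ sstar) ≤ δ * R :=
                    mul_le_mul_of_nonneg_left h3 hδpos.le
                  exact mul_le_mul_of_nonneg_right h6 hkpos.le
              _ ≤ δ * R * dist z y := mul_le_mul_of_nonneg_left hkzy (by positivity)
          linarith
      _ ≤ ε' + e0 := by
          have : δ*R/k + δ*R/k = 2*δ*R/k := by ring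
          linarith [hke0]
  -- Pythagorean bounds via anchored comparison
  have hDua : dist u a ≤ √(δ^2 + ε'^2) := by
    have hα := hγ.restrict ⟨le_refl _, zero_le_one⟩ ht0γ ht0mem.1
    rw [hγ.1, hγt0] at hα
    have hβ := hηs.restrict ⟨le_refl _, zero_le_one⟩ htumem htumem.1
    rw [hηs.1, ← hudef] at hβ
    have hsmem : (dist o z - δ)/dist o z ∈ Set.Icc (0:ℝ) 1 := by
      constructor
      · apply div_nonneg _ hℓpos.le
        linarith [hδltε', hε'ltε, hoz_ge]
      · rw [div_le_one hℓpos]; linarith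
    have hanch := cat0_anchored hCAT0 hα hβ hsmem hℓpos
    have hαval : γ (0 + (dist o z - δ)/dist o z * (t0 - 0)) = a := by
      rw [hadef]
      congr 1
      rw [ht0def, htadef]
      field_simp
      ring
    rw [hαval] at hanch
    have hzu : dist z u = ε' := by rw [dist_comm]; exact hu_z
    rw [hou, hzu] at hanch
    have hbound : dist a u ^ 2 ≤ δ^2 + ε'^2 := by
      have expand : ((dist o z - δ)/dist o z * dist o z)^2
          - (dist o z - δ)/dist o z * ((dist o z)^2 + (dist o z)^2 - ε'^2) + (dist o z)^2
          = δ^2 + ε'^2 * ((dist o z - δ)/dist o z) := by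
        field_simp
        ring
      rw [expand] at hanch
      have h1 : ε'^2 * ((dist o z - δ)/dist o z) ≤ ε'^2 := by
        calc ε'^2 * ((dist o z - δ)/dist o z) ≤ ε'^2 * 1 :=
              mul_le_mul_of_nonneg_left hsmem.2 (sq_nonneg ε')
          _ = ε'^2 := mul_one _
      linarith
    rw [dist_comm u a]
    calc dist a u = √((dist a u)^2) := (Real.sqrt_sq dist_nonneg).symm
      _ ≤ √(δ^2 + ε'^2) := Real.sqrt_le_sqrt hbound
  have hDub : dist u b ≤ √(δ^2 + (ε' + e0)^2) := by
    have hα := hηs.restrict ⟨le_refl _, zero_le_one⟩ htb'mem htb'mem.1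
    rw [hηs.1, ← hu2def] at hα
    have hβ := hγ.restrict ⟨le_refl _, zero_le_one⟩ htbmem htbmem.1
    rw [hγ.1, ← hbdef] at hβ
    have hozδ : 0 < dist o z + δ := by positivity
    have hsmem : dist o z/(dist o z + δ) ∈ Set.Icc (0:ℝ) 1 := by
      constructor
      · positivity
      · rw [div_le_one hozδ]; linarith
    have hanch := cat0_anchored hCAT0 hα hβ hsmem (by rw [hou2]; exact hozδ)
    have hαval : η sstar (0 + dist o z/(dist o z + δ) * (tb' - 0)) = u := by
      rw [hudef]
      congr 1
      rw [htb'def, htudef]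
      field_simp
      try ring
    rw [hαval, hou2] at hanch
    have hob : dist o b = dist o z + δ := by
      rw [hbdef, hγ.dist_src htbmem, htbdef]
      field_simp
    rw [hob] at hanch
    set D2 : ℝ := dist u2 b with hD2def
    have hbound : dist u b ^ 2 ≤ δ^2 + D2^2 := by
      have expand : (dist o z/(dist o z + δ) * (dist o z + δ))^2
          - dist o z/(dist o z + δ) * ((dist o z + δ)^2 + (dist o z + δ)^2 - D2^2)
          + (dist o z + δ)^2
          = δ^2 + D2^2 * (dist o z/(dist o z + δ)) := by
        field_simp
        ring
      rw [expand] at hanch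
      have h1 : D2^2 * (dist o z/(dist o z + δ)) ≤ D2^2 := by
        calc D2^2 * (dist o z/(dist o z + δ)) ≤ D2^2 * 1 :=
              mul_le_mul_of_nonneg_left hsmem.2 (sq_nonneg D2)
          _ = D2^2 := mul_one _
      linarith
    have hD2' : D2 ≤ ε' + e0 := by rw [hD2def, dist_comm u2 b]; exact hD2
    have hbound2 : dist u b ^2 ≤ δ^2 + (ε' + e0)^2 := by
      have : D2^2 ≤ (ε' + e0)^2 := pow_le_pow_left₀ dist_nonneg hD2' 2
      linarith
    calc dist u b = √((dist u b)^2) := (Real.sqrt_sq dist_nonneg).symm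
      _ ≤ √(δ^2 + (ε' + e0)^2) := Real.sqrt_le_sqrt hbound2
  -- CAT(-1) comparison on the triangle (a, u, b)
  obtain ⟨ξ1, hξ1⟩ := hCAT0.1 a u
  obtain ⟨ξ2, hξ2⟩ := hCAT0.1 u b
  have htatb : ta ≤ tb := by
    rw [htadef, htbdef]
    have hnum : dist o z - δ ≤ dist o z + δ := by linarith
    gcongr
  have hζ0 := hγ.restrict htamem htbmem htatb
  rw [← hadef, ← hbdef] at hζ0
  set ζr : ℝ → X := fun t => γ (ta + (1-t)*(tb-ta)) with hζrdef
  have hζr : IsGeodesic ζr b a := hζ0.symm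
  have hζrmid : ζr (1/2) = z := by
    rw [hζrdef]
    simp only
    rw [← hγt0]
    congr 1
    rw [htadef, htbdef, ht0def]
    field_simp
    ring
  have hε'c' : ε' < c := by linarith [hε'c, hc]
  have hball1 : ∀ s ∈ Set.Icc (0:ℝ) 1, ξ1 s ∈ Metric.ball z c := by
    intro s hsm
    rw [Metric.mem_ball, dist_comm]
    calc dist z (ξ1 s) ≤ (1-s) * dist z a + s * dist z u := cat0_dist_point hCAT0 hξ1 z hsm
      _ ≤ (1-s) * ε' + s * ε' := by
          have h1 : dist z a ≤ ε' := by rw [dist_comm, hdaz]; linarith [hδltε']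
          have h2 : dist z u ≤ ε' := by rw [dist_comm, hu_z]
          exact add_le_add (mul_le_mul_of_nonneg_left h1 (by linarith [hsm.2]))
            (mul_le_mul_of_nonneg_left h2 hsm.1)
      _ = ε' := by ring
      _ < c := hε'c'
  have hball2 : ∀ s ∈ Set.Icc (0:ℝ) 1, ξ2 s ∈ Metric.ball z c := by
    intro s hsm
    rw [Metric.mem_ball, dist_comm]
    calc dist z (ξ2 s) ≤ (1-s) * dist z u + s * dist z b := cat0_dist_point hCAT0 hξ2 z hsm
      _ ≤ (1-s) * ε' + s * ε' := by
          have h1 : dist z u ≤ ε' := by rw [dist_comm, hu_z]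
          have h2 : dist z b ≤ ε' := by rw [hdzb]; linarith [hδltε']
          exact add_le_add (mul_le_mul_of_nonneg_left h1 (by linarith [hsm.2]))
            (mul_le_mul_of_nonneg_left h2 hsm.1)
      _ = ε' := by ring
      _ < c := hε'c'
  have hball3 : ∀ s ∈ Set.Icc (0:ℝ) 1, ζr s ∈ Metric.ball z c := by
    intro s hsm
    rw [Metric.mem_ball, dist_comm]
    calc dist z (ζr s) ≤ (1-s) * dist z b + s * dist z a := cat0_dist_point hCAT0 hζr z hsm
      _ ≤ (1-s) * ε' + s * ε' := by
          have h1 : dist z b ≤ ε' := by rw [hdzb]; linarith [hδltε']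
          have h2 : dist z a ≤ ε' := by rw [dist_comm, hdaz]; linarith [hδltε']
          exact add_le_add (mul_le_mul_of_nonneg_left h1 (by linarith [hsm.2]))
            (mul_le_mul_of_nonneg_left h2 hsm.1)
      _ = ε' := by ring
      _ < c := hε'c'
  obtain ⟨p', q', r', τpq, τqr, τrp, hτpq, hτqr, hτrp, E1, E2, E3, hcomp⟩ :=
    hCATm1.2 a u b ξ1 ξ2 ζr hξ1 hξ2 hζr hball1 hball2 hball3
  have hhalfmem : (1/2 : ℝ) ∈ Set.Icc (0:ℝ) 1 := by norm_num
  have h0mem : (0:ℝ) ∈ Set.Icc (0:ℝ) 1 := ⟨le_refl _, zero_le_one⟩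
  have hkey := hcomp 1 2 0 h0mem (1/2) hhalfmem
  simp only [Matrix.cons_val_one, Matrix.head_cons, Matrix.cons_val_two,
    Matrix.tail_cons, Matrix.cons_val_zero] at hkey
  rw [hξ2.1, hζrmid, hτqr.1] at hkey
  -- hkey : dist u z ≤ dist q' (τrp (1/2))
  have hmid1 : dist r' (τrp (1/2)) = dist r' p' / 2 := by
    rw [hτrp.dist_src hhalfmem]
    ring
  have hmid2 : dist (τrp (1/2)) p' = dist r' p' / 2 := by
    rw [hτrp.dist_tgt hhalfmem]
    ring
  have hmedian := median_identity r' p' (τrp (1/2)) q' hmid1 hmid2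
  have hrp2δ : dist r' p' = 2*δ := by rw [E3, dist_comm b a, hdab]
  rw [hrp2δ, show (2*δ)/2 = δ by ring] at hmedian
  have hqr : dist q' r' = dist u b := E2
  have hqp : dist q' p' = dist a u := by rw [dist_comm q' p', E1]
  rw [hqr, hqp] at hmedian
  -- assemble the contradiction
  have hcoshδpos : 0 < Real.cosh δ := Real.cosh_pos δ
  have hstep1 : Real.cosh ε' * Real.cosh δ ≤ Real.cosh (dist q' (τrp (1/2))) * Real.cosh δ := by
    apply mul_le_mul_of_nonneg_right _ hcoshδpos.le
    rw [Real.cosh_le_cosh, abs_of_nonneg hε'pos.le, abs_of_nonneg dist_nonneg]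
    rw [← hu_z]
    exact hkey
  have hstep2 : Real.cosh (dist u b) ≤ Real.cosh (√(δ^2 + (ε'+e0)^2)) := by
    rw [Real.cosh_le_cosh, abs_of_nonneg dist_nonneg, abs_of_nonneg (Real.sqrt_nonneg _)]
    exact hDub
  have hstep3 : Real.cosh (dist a u) ≤ Real.cosh (√(δ^2 + ε'^2)) := by
    rw [Real.cosh_le_cosh, abs_of_nonneg dist_nonneg, abs_of_nonneg (Real.sqrt_nonneg _)]
    rw [dist_comm a u]
    exact hDua
  have hnum : Real.cosh (√(δ^2 + (ε'+e0)^2)) ≤ Real.cosh (√(δ^2 + ε'^2)) + ρ := by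
    have hab : √(δ^2 + ε'^2) ≤ √(δ^2 + (ε'+e0)^2) := by
      apply Real.sqrt_le_sqrt
      have : ε'^2 ≤ (ε'+e0)^2 := pow_le_pow_left₀ hε'pos.le (by linarith [he0pos.le]) 2
      linarith
    have hbM : √(δ^2 + (ε'+e0)^2) ≤ M0 := by
      rw [hM0def]
      calc √(δ^2 + (ε'+e0)^2) ≤ √((δ + (ε'+e0))^2) := by
            apply Real.sqrt_le_sqrt
            have hexpand : (δ + (ε'+e0))^2 = δ^2 + (ε'+e0)^2 + 2*δ*(ε'+e0) := by ring
            have hpos : (0:ℝ) ≤ 2*δ*(ε'+e0) := by positivity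
            linarith
        _ = δ + (ε'+e0) := Real.sqrt_sq (by positivity)
        _ ≤ δ + ε' + 1 := by linarith [he0le1]
    have hdiff := cosh_sub_cosh_le (Real.sqrt_nonneg _) hab hbM
    have hgap : √(δ^2 + (ε'+e0)^2) - √(δ^2 + ε'^2) ≤ e0 := by
      have := sqrt_sq_add_sq_le hδpos.le hε'pos.le he0pos.le
      linarith
    have hexp : (√(δ^2 + (ε'+e0)^2) - √(δ^2 + ε'^2)) * Real.exp M0 ≤ e0 * Real.exp M0 := by
      apply mul_le_mul_of_nonneg_right hgap (Real.exp_pos _).le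
    linarith [he0exp]
  have hfinal : Real.cosh ε' * Real.cosh δ ≤ Real.cosh δ * Real.cosh ε' - ρ/2 := by
    calc Real.cosh ε' * Real.cosh δ
        ≤ Real.cosh (dist q' (τrp (1/2))) * Real.cosh δ := hstep1
      _ = (Real.cosh (dist u b) + Real.cosh (dist a u)) / 2 := hmedian
      _ ≤ (Real.cosh (√(δ^2 + (ε'+e0)^2)) + Real.cosh (√(δ^2 + ε'^2))) / 2 := by
          linarith [hstep2, hstep3]
      _ ≤ (Real.cosh (√(δ^2 + ε'^2)) + ρ + Real.cosh (√(δ^2 + ε'^2))) / 2 := by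
          linarith [hnum]
      _ = Real.cosh (√(δ^2 + ε'^2)) + ρ/2 := by ring
      _ = Real.cosh δ * Real.cosh ε' - ρ/2 := by
          rw [hρdef]; ring
  have hcomm : Real.cosh ε' * Real.cosh δ = Real.cosh δ * Real.cosh ε' := mul_comm _ _
  linarith [hρpos, hfinal]
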